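/- arXiv:1109.5096 — 2 statements merged into one kernel-verified Lean document; each statement's English description precedes it below -/
import Mathlib

section
/- Let f ∈ L^∞([0,∞)) satisfy f > ε almost everywhere for some ε > 0, and |f(s) − 1| ≤ J e^{−as} almost everywhere for constants J > 0 and a ∈ (0,2). Let λ be a solution of the Riccati equation λ′ + λ² = f(s) with λ(0) > 0. Then λ is a positive Lipschitz function and there exists a constant C = C(a, J, λ(0)) > 0 such that |λ(s) − 1| ≤ C e^{−as} for all s > 0. -/
open Set MeasureTheory

lemma riccati_expDeriv (c k : ℝ) (u : ℝ) :
    HasDerivAt (fun v => c * Real.exp (k * v)) (c * k * Real.exp (k * u)) u := by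
  have h : HasDerivAt (fun v : ℝ => k * v) k u := by simpa using (hasDerivAt_id u).const_mul k
  have h2 := (Real.hasDerivAt_exp (k * u)).comp u h
  simpa [mul_comm, mul_assoc, mul_left_comm] using h2.const_mul c

lemma riccati_expCont (c k : ℝ) : Continuous (fun u : ℝ => c * Real.exp (k * u)) := by
  continuity

lemma riccati_intExp (c k s t : ℝ) :
    ∫ u in s..t, c * k * Real.exp (k * u) = c * Real.exp (k * t) - c * Real.exp (k * s) := by
  exact intervalIntegral.integral_eq_sub_of_hasDerivAt (fun u _ => riccati_expDeriv c k u)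
    (Continuous.intervalIntegrable (by continuity) s t)

/-- Barrier comparison lemma. -/
lemma riccati_barrier {T : ℝ} {g φ : ℝ → ℝ} (hg : ContinuousOn g (Ici T)) (hφ : Continuous φ)
    (h0 : g T ≤ φ T)
    (key : ∀ s t : ℝ, T ≤ s → s ≤ t → (∀ u ∈ Ioc s t, φ u ≤ g u) → g t - g s ≤ φ t - φ s) :
    ∀ t ∈ Ici T, g t ≤ φ t := by
  intro t ht
  by_contra hgt
  push_neg at hgt
  set S : Set ℝ := {s | s ∈ Icc T t ∧ g s ≤ φ s} with hS
  have hTS : T ∈ S := ⟨⟨le_refl T, ht⟩, h0⟩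
  have hne : S.Nonempty := ⟨T, hTS⟩
  have hbdd : BddAbove S := ⟨t, fun s hs => hs.1.2⟩
  have hclosed : IsClosed S := by
    have : S = Icc T t ∩ (fun s => g s - φ s) ⁻¹' (Iic 0) := by
      ext u
      simp only [hS, mem_setOf_eq, mem_inter_iff, mem_preimage, mem_Iic, sub_nonpos]
    rw [this]
    exact ContinuousOn.preimage_isClosed_of_isClosed
      ((hg.mono Icc_subset_Ici_self).sub hφ.continuousOn) isClosed_Icc isClosed_Iic
  set t₁ := sSup S with ht₁
  have ht₁S : t₁ ∈ S := hclosed.csSup_mem hne hbdd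
  have ht₁t : t₁ ≤ t := ht₁S.1.2
  have hpt : ∀ u ∈ Ioc t₁ t, φ u ≤ g u := by
    intro u hu
    by_contra hc
    push_neg at hc
    have : u ∈ S := ⟨⟨ht₁S.1.1.trans hu.1.le, hu.2⟩, hc.le⟩
    exact absurd (le_csSup hbdd this) (not_le.mpr hu.1)
  have := key t₁ t ht₁S.1.1 ht₁t hpt
  linarith [ht₁S.2]

set_option maxHeartbeats 4000000 in
/-- **Riccati estimate.** If `f ∈ L^∞([0,∞))` satisfies `f > ε` a.e. and `|f(s) - 1| ≤ J e^{-as}`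
a.e. with `a ∈ (0,2)`, and `λ` is an (absolutely continuous) solution of `λ' + λ² = f` with
`λ(0) > 0`, then `λ` is a positive Lipschitz function and `|λ - 1| ≤ C e^{-as}` for all `s > 0`,
for some constant `C = C(a, J, λ(0)) > 0`. -/
theorem riccati_estimate (a J ε : ℝ) (ha₀ : 0 < a) (ha₂ : a < 2) (hJ : 0 < J) (hε : 0 < ε)
    (f lam : ℝ → ℝ)
    (hfmeas : AEStronglyMeasurable f (volume.restrict (Ici (0:ℝ))))
    (hfbdd : ∃ B : ℝ, ∀ᵐ s ∂(volume.restrict (Ici (0:ℝ))), |f s| ≤ B)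
    (hflow : ∀ᵐ s ∂(volume.restrict (Ici (0:ℝ))), ε < f s)
    (hfdecay : ∀ᵐ s ∂(volume.restrict (Ici (0:ℝ))), |f s - 1| ≤ J * Real.exp (-a * s))
    (hlamcont : ContinuousOn lam (Ici 0))
    (hlam0 : 0 < lam 0)
    (hODE : ∀ s ∈ Ici (0:ℝ), lam s = lam 0 + ∫ u in (0:ℝ)..s, (f u - (lam u) ^ 2)) :
    (∀ s ∈ Ici (0:ℝ), 0 < lam s) ∧
    (∃ K : NNReal, LipschitzOnWith K lam (Ici 0)) ∧
    ∃ C > 0, ∀ s > (0:ℝ), |lam s - 1| ≤ C * Real.exp (-a * s) := by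
  obtain ⟨B, hB⟩ := hfbdd
  set B' : ℝ := max B 0 with hB'def
  have hB'0 : 0 ≤ B' := le_max_right _ _
  have hB' : ∀ᵐ s ∂(volume.restrict (Ici (0:ℝ))), |f s| ≤ B' :=
    hB.mono fun s hs => hs.trans (le_max_left _ _)
  have haeIcc : ∀ s t : ℝ, 0 ≤ s → ∀ᵐ u ∂(volume.restrict (Icc s t)),
      u ∈ Ioo s t ∧ |f u| ≤ B' ∧ ε < f u ∧ |f u - 1| ≤ J * Real.exp (-a * u) := by
    intro s t hs
    have hsub : Icc s t ⊆ Ici (0:ℝ) := fun u hu => hs.trans hu.1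
    have h1 : ∀ᵐ u ∂(volume.restrict (Icc s t)), u ∈ Ioo s t := by
      rw [← Measure.restrict_congr_set Ioo_ae_eq_Icc]
      exact ae_restrict_mem measurableSet_Ioo
    have h2 := ae_restrict_of_ae_restrict_of_subset hsub hB'
    have h3 := ae_restrict_of_ae_restrict_of_subset hsub hflow
    have h4 := ae_restrict_of_ae_restrict_of_subset hsub hfdecay
    filter_upwards [h1, h2, h3, h4] with u k1 k2 k3 k4
    exact ⟨k1, k2, k3, k4⟩
  have hfint : ∀ s t : ℝ, 0 ≤ s → IntegrableOn f (Icc s t) := by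
    intro s t hs
    refine ⟨hfmeas.mono_measure (Measure.restrict_mono (fun u hu => hs.trans hu.1) le_rfl), ?_⟩
    exact HasFiniteIntegral.restrict_of_bounded (C := B') measure_Icc_lt_top
      ((haeIcc s t hs).mono fun u hu => by simpa [Real.norm_eq_abs] using hu.2.1)
  have hii : ∀ s t : ℝ, 0 ≤ s → s ≤ t →
      IntervalIntegrable (fun u => f u - lam u ^ 2) volume s t := by
    intro s t hs hst
    have h2 : IntegrableOn (fun u => lam u ^ 2) (Icc s t) :=
      ((hlamcont.mono (fun u hu => hs.trans hu.1)).pow 2).integrableOn_Icc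
    rw [intervalIntegrable_iff_integrableOn_Icc_of_le hst]
    exact (hfint s t hs).sub h2
  have hΔ : ∀ s t : ℝ, 0 ≤ s → s ≤ t →
      lam t - lam s = ∫ u in s..t, (f u - lam u ^ 2) := by
    intro s t hs hst
    have ht0 : (0:ℝ) ≤ t := hs.trans hst
    have hadd := intervalIntegral.integral_add_adjacent_intervals
      (hii 0 s le_rfl hs) (hii s t hs hst)
    rw [hODE s hs, hODE t ht0]
    linarith
  -- positivity
  have hpos : ∀ t ∈ Ici (0:ℝ), 0 < lam t := by
    intro t ht
    by_contra hc
    push_neg at hc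
    set m : ℝ := min (lam 0) (Real.sqrt ε) / 2 with hmdef
    have hsε : 0 < Real.sqrt ε := Real.sqrt_pos.mpr hε
    have hm0 : 0 < m := div_pos (lt_min hlam0 hsε) two_pos
    have hmlam : m ≤ lam 0 := by
      have := min_le_left (lam 0) (Real.sqrt ε); rw [hmdef]; linarith
    have hmε : m ^ 2 < ε := by
      have h1 := min_le_right (lam 0) (Real.sqrt ε)
      have h2 := Real.sq_sqrt hε.le
      rw [hmdef]; nlinarith
    set A : Set ℝ := {s | s ∈ Icc 0 t ∧ lam s ≤ 0} with hA
    have htA : t ∈ A := ⟨⟨ht, le_refl t⟩, hc⟩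
    have hAne : A.Nonempty := ⟨t, htA⟩
    have hAbdd : BddBelow A := ⟨0, fun s hs => hs.1.1⟩
    have hAclosed : IsClosed A := by
      have : A = Icc 0 t ∩ lam ⁻¹' (Iic 0) := by
        ext u; simp only [hA, mem_setOf_eq, mem_inter_iff, mem_preimage, mem_Iic]
      rw [this]
      exact ContinuousOn.preimage_isClosed_of_isClosed
        (hlamcont.mono Icc_subset_Ici_self) isClosed_Icc isClosed_Iic
    set t₀ : ℝ := sInf A with ht₀def
    have ht₀A : t₀ ∈ A := hAclosed.csInf_mem hAne hAbdd
    have ht₀0 : 0 ≤ t₀ := ht₀A.1.1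
    have hbefore : ∀ u, 0 ≤ u → u < t₀ → 0 < lam u := by
      intro u hu hut
      by_contra h; push_neg at h
      exact absurd (csInf_le hAbdd ⟨⟨hu, hut.le.trans ht₀A.1.2⟩, h⟩) (not_le.mpr hut)
    set A2 : Set ℝ := {s | s ∈ Icc 0 t₀ ∧ m ≤ lam s} with hA2
    have h0A2 : (0:ℝ) ∈ A2 := ⟨⟨le_refl 0, ht₀0⟩, hmlam⟩
    have hA2ne : A2.Nonempty := ⟨0, h0A2⟩
    have hA2bdd : BddAbove A2 := ⟨t₀, fun s hs => hs.1.2⟩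
    have hA2closed : IsClosed A2 := by
      have : A2 = Icc 0 t₀ ∩ lam ⁻¹' (Ici m) := by
        ext u; simp only [hA2, mem_setOf_eq, mem_inter_iff, mem_preimage, mem_Ici]
      rw [this]
      exact ContinuousOn.preimage_isClosed_of_isClosed
        (hlamcont.mono Icc_subset_Ici_self) isClosed_Icc isClosed_Ici
    set t₁ : ℝ := sSup A2 with ht₁def
    have ht₁A2 : t₁ ∈ A2 := hA2closed.csSup_mem hA2ne hA2bdd
    have ht₁0 : 0 ≤ t₁ := ht₁A2.1.1
    have ht₁t₀ : t₁ ≤ t₀ := ht₁A2.1.2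
    have hsmall : ∀ u ∈ Ioc t₁ t₀, lam u < m := by
      intro u hu
      by_contra h; push_neg at h
      exact absurd (le_csSup hA2bdd ⟨⟨ht₁0.trans hu.1.le, hu.2⟩, h⟩) (not_le.mpr hu.1)
    have hmono : (∫ _ in t₁..t₀, (0:ℝ)) ≤ ∫ u in t₁..t₀, (f u - lam u ^ 2) := by
      apply intervalIntegral.integral_mono_ae_restrict ht₁t₀ intervalIntegrable_const
        (hii t₁ t₀ ht₁0 ht₁t₀)
      filter_upwards [haeIcc t₁ t₀ ht₁0] with u hu
      obtain ⟨hIoo, -, hεf, -⟩ := hu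
      have hu0 : (0:ℝ) ≤ u := ht₁0.trans hIoo.1.le
      have h1 : lam u < m := hsmall u (Ioo_subset_Ioc_self hIoo)
      have h2 : 0 < lam u := hbefore u hu0 hIoo.2
      show (0:ℝ) ≤ f u - lam u ^ 2
      nlinarith
    rw [← hΔ t₁ t₀ ht₁0 ht₁t₀] at hmono
    simp only [intervalIntegral.integral_const, smul_eq_mul, mul_zero] at hmono
    have := ht₀A.2
    have := ht₁A2.2
    linarith
  -- upper barrier
  set C₁ : ℝ := max (J / (2 - a)) (lam 0 + 1) with hC₁def
  have hC₁lam : lam 0 + 1 ≤ C₁ := le_max_right _ _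
  have hC₁0 : 0 < C₁ := lt_of_lt_of_le (by linarith) hC₁lam
  have hJC₁ : J ≤ (2 - a) * C₁ := by
    have h := le_max_left (J / (2 - a)) (lam 0 + 1)
    rw [div_le_iff₀ (by linarith : (0:ℝ) < 2 - a)] at h
    nlinarith
  have hub : ∀ t ∈ Ici (0:ℝ), lam t - 1 ≤ C₁ * Real.exp (-a * t) := by
    refine riccati_barrier (hlamcont.sub continuousOn_const) (riccati_expCont C₁ (-a)) ?_ ?_
    · show lam 0 - 1 ≤ C₁ * Real.exp (-a * 0)
      norm_num; linarith
    · intro s t hs hst hpt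
      show (lam t - 1) - (lam s - 1) ≤ C₁ * Real.exp (-a * t) - C₁ * Real.exp (-a * s)
      have hEq1 : (lam t - 1) - (lam s - 1) = ∫ u in s..t, (f u - lam u ^ 2) := by
        rw [← hΔ s t hs hst]; ring
      have hEq2 : C₁ * Real.exp (-a * t) - C₁ * Real.exp (-a * s)
          = ∫ u in s..t, C₁ * (-a) * Real.exp (-a * u) := (riccati_intExp C₁ (-a) s t).symm
      rw [hEq1, hEq2]
      apply intervalIntegral.integral_mono_ae_restrict hst (hii s t hs hst)
        (Continuous.intervalIntegrable (riccati_expCont (C₁ * (-a)) (-a)) s t)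
      filter_upwards [haeIcc s t hs] with u hu
      obtain ⟨hIoo, -, -, hdec⟩ := hu
      have hle := hpt u (Ioo_subset_Ioc_self hIoo)
      have hE : 0 < Real.exp (-a * u) := Real.exp_pos _
      have hfu : f u ≤ 1 + J * Real.exp (-a * u) := by
        have h := (abs_le.mp hdec).2; linarith
      have hA0 : (0:ℝ) ≤ 1 + C₁ * Real.exp (-a * u) := by nlinarith [mul_pos hC₁0 hE]
      have hAle : 1 + C₁ * Real.exp (-a * u) ≤ lam u := by
        show 1 + C₁ * Real.exp (-a * u) ≤ lam u; linarith [hle]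
      have hsq := mul_self_le_mul_self hA0 hAle
      show f u - lam u ^ 2 ≤ C₁ * (-a) * Real.exp (-a * u)
      nlinarith [mul_le_mul_of_nonneg_right hJC₁ hE.le, sq_nonneg (C₁ * Real.exp (-a * u))]
  -- upper bound M = 1 + C₁
  have hM : ∀ t ∈ Ici (0:ℝ), lam t ≤ 1 + C₁ := by
    intro t ht
    have h1 := hub t ht
    have h2 : Real.exp (-a * t) ≤ 1 := by
      have : Real.exp (-a * t) ≤ Real.exp 0 :=
        Real.exp_le_exp.mpr (by nlinarith [mem_Ici.mp ht])
      simpa using this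
    nlinarith
  -- Lipschitz
  have hLip : ∀ s t : ℝ, 0 ≤ s → s ≤ t →
      |lam t - lam s| ≤ (B' + (1 + C₁) ^ 2) * (t - s) := by
    intro s t hs hst
    rw [hΔ s t hs hst]
    have hup : (∫ u in s..t, (f u - lam u ^ 2)) ≤ (t - s) * (B' + (1 + C₁) ^ 2) := by
      have h1 : (∫ _ in s..t, (B' + (1 + C₁) ^ 2 : ℝ)) = (t - s) * (B' + (1 + C₁) ^ 2) := by
        simp [intervalIntegral.integral_const, smul_eq_mul]; ring
      rw [← h1]
      apply intervalIntegral.integral_mono_ae_restrict hst (hii s t hs hst)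
        intervalIntegrable_const
      filter_upwards [haeIcc s t hs] with u hu
      obtain ⟨hIoo, hb, -, -⟩ := hu
      have h0 : 0 < lam u := hpos u (hs.trans hIoo.1.le)
      have := abs_le.mp hb
      show f u - lam u ^ 2 ≤ B' + (1 + C₁) ^ 2
      nlinarith [sq_nonneg (1 + C₁), sq_nonneg (lam u)]
    have hdown : -((t - s) * (B' + (1 + C₁) ^ 2)) ≤ ∫ u in s..t, (f u - lam u ^ 2) := by
      have h1 : (∫ _ in s..t, (-(B' + (1 + C₁) ^ 2) : ℝ)) = -((t - s) * (B' + (1 + C₁) ^ 2)) := by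
        simp only [intervalIntegral.integral_const, smul_eq_mul]; ring
      rw [← h1]
      apply intervalIntegral.integral_mono_ae_restrict hst intervalIntegrable_const
        (hii s t hs hst)
      filter_upwards [haeIcc s t hs] with u hu
      obtain ⟨hIoo, hb, -, -⟩ := hu
      have hu0 : (0:ℝ) ≤ u := hs.trans hIoo.1.le
      have h0 : 0 < lam u := hpos u hu0
      have hMu : lam u ≤ 1 + C₁ := hM u hu0
      have := abs_le.mp hb
      have hsq := mul_self_le_mul_self h0.le hMu
      show -(B' + (1 + C₁) ^ 2) ≤ f u - lam u ^ 2
      nlinarith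
    rw [abs_le]
    constructor <;> linarith
  have hLipOn : ∃ K : NNReal, LipschitzOnWith K lam (Ici 0) := by
    refine ⟨Real.toNNReal (B' + (1 + C₁) ^ 2), LipschitzOnWith.of_dist_le_mul ?_⟩
    intro x hx y hy
    rw [Real.dist_eq, Real.dist_eq, Real.coe_toNNReal _ (add_nonneg hB'0 (sq_nonneg _))]
    rcases le_total x y with h | h
    · calc |lam x - lam y| = |lam y - lam x| := abs_sub_comm _ _
        _ ≤ (B' + (1 + C₁) ^ 2) * (y - x) := hLip x y hx h
        _ ≤ (B' + (1 + C₁) ^ 2) * |x - y| := by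
            apply mul_le_mul_of_nonneg_left _ (add_nonneg hB'0 (sq_nonneg _))
            rw [abs_sub_comm]; exact le_abs_self _
    · calc |lam x - lam y| ≤ (B' + (1 + C₁) ^ 2) * (x - y) := hLip y x hy h
        _ ≤ (B' + (1 + C₁) ^ 2) * |x - y| := by
            apply mul_le_mul_of_nonneg_left (le_abs_self _) (add_nonneg hB'0 (sq_nonneg _))
  -- stage 1 lower bound, rate b = min a (1/2)
  set b : ℝ := min a (1/2) with hbdef
  have hb0 : 0 < b := lt_min ha₀ (by norm_num)
  have hba : b ≤ a := min_le_left _ _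
  have hb2 : b ≤ 1/2 := min_le_right _ _
  set C₂ : ℝ := max (2 * J) 1 with hC₂def
  have hC₂1 : (1:ℝ) ≤ C₂ := le_max_right _ _
  have hC₂J : 2 * J ≤ C₂ := le_max_left _ _
  have hC₂0 : (0:ℝ) < C₂ := lt_of_lt_of_le one_pos hC₂1
  have hlb1 : ∀ t ∈ Ici (0:ℝ), 1 - lam t ≤ C₂ * Real.exp (-b * t) := by
    refine riccati_barrier (continuousOn_const.sub hlamcont) (riccati_expCont C₂ (-b)) ?_ ?_
    · show 1 - lam 0 ≤ C₂ * Real.exp (-b * 0)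
      norm_num; linarith
    · intro s t hs hst hpt
      show (1 - lam t) - (1 - lam s) ≤ C₂ * Real.exp (-b * t) - C₂ * Real.exp (-b * s)
      have hEq1 : (1 - lam t) - (1 - lam s) = ∫ u in s..t, (lam u ^ 2 - f u) := by
        have h2 : (∫ u in s..t, (lam u ^ 2 - f u)) = -∫ u in s..t, (f u - lam u ^ 2) := by
          rw [← intervalIntegral.integral_neg]; congr 1; funext u; ring
        rw [h2, ← hΔ s t hs hst]; ring
      have hEq2 : C₂ * Real.exp (-b * t) - C₂ * Real.exp (-b * s)
          = ∫ u in s..t, C₂ * (-b) * Real.exp (-b * u) := (riccati_intExp C₂ (-b) s t).symm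
      rw [hEq1, hEq2]
      have hii' : IntervalIntegrable (fun u => lam u ^ 2 - f u) volume s t := by
        simpa [Pi.neg_def, neg_sub] using (hii s t hs hst).neg
      apply intervalIntegral.integral_mono_ae_restrict hst hii'
        (Continuous.intervalIntegrable (riccati_expCont (C₂ * (-b)) (-b)) s t)
      filter_upwards [haeIcc s t hs] with u hu
      obtain ⟨hIoo, -, -, hdec⟩ := hu
      have hu0 : (0:ℝ) ≤ u := hs.trans hIoo.1.le
      have hl := hpt u (Ioo_subset_Ioc_self hIoo)
      have hl' : C₂ * Real.exp (-b * u) ≤ 1 - lam u := hl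
      have hlu0 : 0 < lam u := hpos u hu0
      have hEb : 0 < Real.exp (-b * u) := Real.exp_pos _
      have hEab : Real.exp (-a * u) ≤ Real.exp (-b * u) := by
        apply Real.exp_le_exp.mpr; nlinarith
      have hfu : 1 - J * Real.exp (-a * u) ≤ f u := by
        have h := (abs_le.mp hdec).1; linarith
      have hw1 : C₂ * Real.exp (-b * u) < 1 := by linarith
      have hsq : lam u * lam u ≤ (1 - C₂ * Real.exp (-b * u)) * (1 - C₂ * Real.exp (-b * u)) :=
        mul_self_le_mul_self hlu0.le (by linarith)
      have hJw : J * Real.exp (-a * u) ≤ (1 - b) * (C₂ * Real.exp (-b * u)) := by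
        have h1 : J * Real.exp (-a * u) ≤ J * Real.exp (-b * u) := by nlinarith
        have h2 : J ≤ (1 - b) * C₂ := by
          nlinarith [mul_nonneg hJ.le (by linarith : (0:ℝ) ≤ 1 - 2 * b)]
        calc J * Real.exp (-a * u) ≤ J * Real.exp (-b * u) := h1
          _ ≤ ((1 - b) * C₂) * Real.exp (-b * u) := mul_le_mul_of_nonneg_right h2 hEb.le
          _ = (1 - b) * (C₂ * Real.exp (-b * u)) := by ring
      show lam u ^ 2 - f u ≤ C₂ * (-b) * Real.exp (-b * u)
      nlinarith [mul_pos hC₂0 hEb]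
  -- threshold time T
  set δ : ℝ := (2 - a) / 2 with hδdef
  have hδ0 : 0 < δ := by rw [hδdef]; linarith
  have hδ1 : δ < 1 := by rw [hδdef]; linarith
  set T : ℝ := max 0 (Real.log (C₂ / δ) / b) with hTdef
  have hT0 : (0:ℝ) ≤ T := le_max_left _ _
  have hTlog : Real.log (C₂ / δ) ≤ b * T := by
    have h1 : Real.log (C₂ / δ) / b ≤ T := le_max_right _ _
    rw [div_le_iff₀ hb0] at h1; linarith
  have hTexp : C₂ * Real.exp (-(b * T)) ≤ δ := by
    have hpos' : 0 < C₂ / δ := div_pos hC₂0 hδ0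
    have h2 : C₂ / δ ≤ Real.exp (b * T) := by
      rw [← Real.exp_log hpos']; exact Real.exp_le_exp.mpr hTlog
    rw [div_le_iff₀ hδ0] at h2
    have hE : 0 < Real.exp (b * T) := Real.exp_pos _
    rw [Real.exp_neg]
    calc C₂ * (Real.exp (b * T))⁻¹ ≤ (Real.exp (b * T) * δ) * (Real.exp (b * T))⁻¹ := by
          apply mul_le_mul_of_nonneg_right h2 (by positivity)
      _ = δ := by field_simp
  have hδlam : ∀ u, T ≤ u → 1 - lam u ≤ δ := by
    intro u hTu
    have hu0 : (0:ℝ) ≤ u := hT0.trans hTu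
    have h1 := hlb1 u hu0
    have h2 : Real.exp (-b * u) ≤ Real.exp (-(b * T)) := Real.exp_le_exp.mpr (by nlinarith)
    nlinarith [Real.exp_pos (-b * u)]
  -- stage 2 lower bound, rate a
  set C₃ : ℝ := max (2 * J / (2 - a)) (Real.exp (a * T)) with hC₃def
  have hC₃0 : 0 < C₃ := lt_of_lt_of_le (Real.exp_pos _) (le_max_right _ _)
  have hJC₃ : J ≤ ((2 - a) / 2) * C₃ := by
    have h := le_max_left (2 * J / (2 - a)) (Real.exp (a * T))
    rw [div_le_iff₀ (by linarith : (0:ℝ) < 2 - a)] at h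
    nlinarith
  have hlb2 : ∀ t ∈ Ici T, 1 - lam t ≤ C₃ * Real.exp (-a * t) := by
    refine riccati_barrier
      (continuousOn_const.sub (hlamcont.mono (Ici_subset_Ici.mpr hT0))) (riccati_expCont C₃ (-a)) ?_ ?_
    · show 1 - lam T ≤ C₃ * Real.exp (-a * T)
      have h1 := hδlam T le_rfl
      have h2 : Real.exp (a * T) * Real.exp (-a * T) = 1 := by
        rw [← Real.exp_add]; norm_num
      have h3 : Real.exp (a * T) ≤ C₃ := le_max_right _ _
      nlinarith [Real.exp_pos (-a * T)]
    · intro s t hs hst hpt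
      have hs0 : (0:ℝ) ≤ s := hT0.trans hs
      show (1 - lam t) - (1 - lam s) ≤ C₃ * Real.exp (-a * t) - C₃ * Real.exp (-a * s)
      have hEq1 : (1 - lam t) - (1 - lam s) = ∫ u in s..t, (lam u ^ 2 - f u) := by
        have h2 : (∫ u in s..t, (lam u ^ 2 - f u)) = -∫ u in s..t, (f u - lam u ^ 2) := by
          rw [← intervalIntegral.integral_neg]; congr 1; funext u; ring
        rw [h2, ← hΔ s t hs0 hst]; ring
      have hEq2 : C₃ * Real.exp (-a * t) - C₃ * Real.exp (-a * s)
          = ∫ u in s..t, C₃ * (-a) * Real.exp (-a * u) := (riccati_intExp C₃ (-a) s t).symm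
      rw [hEq1, hEq2]
      have hii' : IntervalIntegrable (fun u => lam u ^ 2 - f u) volume s t := by
        simpa [Pi.neg_def, neg_sub] using (hii s t hs0 hst).neg
      apply intervalIntegral.integral_mono_ae_restrict hst hii'
        (Continuous.intervalIntegrable (riccati_expCont (C₃ * (-a)) (-a)) s t)
      filter_upwards [haeIcc s t hs0] with u hu
      obtain ⟨hIoo, -, -, hdec⟩ := hu
      have huT : T ≤ u := hs.trans hIoo.1.le
      have hl : C₃ * Real.exp (-a * u) ≤ 1 - lam u := hpt u (Ioo_subset_Ioc_self hIoo)
      have hlow : 1 - lam u ≤ δ := hδlam u huT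
      have hE : 0 < Real.exp (-a * u) := Real.exp_pos _
      have hfu : 1 - J * Real.exp (-a * u) ≤ f u := by
        have h := (abs_le.mp hdec).1; linarith
      have hw0 : 0 < C₃ * Real.exp (-a * u) := mul_pos hC₃0 hE
      have h5 : (lam u - 1) * (lam u + 1) ≤ -(C₃ * Real.exp (-a * u)) * (lam u + 1) :=
        mul_le_mul_of_nonneg_right (by linarith) (by linarith)
      have h6 : -(C₃ * Real.exp (-a * u)) * (lam u + 1) ≤
          -(C₃ * Real.exp (-a * u)) * (2 - δ) := by nlinarith
      show lam u ^ 2 - f u ≤ C₃ * (-a) * Real.exp (-a * u)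
      nlinarith [mul_le_mul_of_nonneg_right hJC₃ hE.le]
  -- assemble
  refine ⟨hpos, hLipOn, max (max C₁ C₃) ((2 + C₁) * Real.exp (a * T)), ?_, ?_⟩
  · exact lt_of_lt_of_le hC₁0 ((le_max_left _ _).trans (le_max_left _ _))
  · intro s hs0
    have hs0' : (0:ℝ) ≤ s := hs0.le
    have hE : 0 < Real.exp (-a * s) := Real.exp_pos _
    rcases le_or_gt s T with hsT | hTs
    · have h1 : |lam s - 1| ≤ 2 + C₁ := by
        have hp := hpos s hs0'
        have hm := hM s hs0'
        rw [abs_le]; constructor <;> nlinarith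
      have h2 : (1:ℝ) ≤ Real.exp (a * T) * Real.exp (-a * s) := by
        rw [← Real.exp_add]
        have h3 : (0:ℝ) ≤ a * T + -a * s := by nlinarith
        calc (1:ℝ) = Real.exp 0 := Real.exp_zero.symm
          _ ≤ _ := Real.exp_le_exp.mpr h3
      calc |lam s - 1| ≤ 2 + C₁ := h1
        _ ≤ (2 + C₁) * (Real.exp (a * T) * Real.exp (-a * s)) := by nlinarith
        _ = ((2 + C₁) * Real.exp (a * T)) * Real.exp (-a * s) := by ring
        _ ≤ _ := mul_le_mul_of_nonneg_right (le_max_right _ _) hE.le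
    · rw [abs_sub_le_iff]
      constructor
      · calc lam s - 1 ≤ C₁ * Real.exp (-a * s) := hub s hs0'
          _ ≤ _ := mul_le_mul_of_nonneg_right
              ((le_max_left _ _).trans (le_max_left _ _)) hE.le
      · calc 1 - lam s ≤ C₃ * Real.exp (-a * s) := hlb2 s (mem_Ici.mpr hTs.le)
          _ ≤ _ := mul_le_mul_of_nonneg_right
              ((le_max_right _ _).trans (le_max_left _ _)) hE.le
end

section
/- Let (M, g) be a complete Riemannian manifold and suppose there exist r > 0 and Q > 1 such that every point of M admits harmonic coordinates on the geodesic ball of radius r in which Q^{−1}δ ≤ g ≤ Qδ and |∂g| ≤ Q. Then for every C²-function f : M → ℝ bounded above, there exists a sequence of points p_k ∈ M with f(p_k) → sup_M f, |∇f(p_k)|_g → 0, and limsup_k Δ_g f(p_k) ≤ 0. -/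
open Set Filter

/-- Partial derivative of a function on `ℝ^d` in the `i`-th coordinate direction. -/
noncomputable def pd {d : ℕ} (i : Fin d) (f : (Fin d → ℝ) → ℝ) (x : Fin d → ℝ) : ℝ :=
  fderiv ℝ f x (Pi.single i 1)

namespace CYaux
variable {d : ℕ}
open scoped Matrix


lemma sqrt_sum_sq_eq_norm (c : Fin d → ℝ) :
    Real.sqrt (∑ i, c i ^ 2) = ‖(WithLp.equiv 2 (Fin d → ℝ)).symm c‖ := by
  rw [EuclideanSpace.norm_eq]
  congr 1
  refine Finset.sum_congr rfl fun i _ => ?_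
  rw [Real.norm_eq_abs, sq_abs]; rfl

lemma sqrt_sum_sq_triangle (a b : Fin d → ℝ) :
    Real.sqrt (∑ i, (a i + b i) ^ 2) ≤
      Real.sqrt (∑ i, a i ^ 2) + Real.sqrt (∑ i, b i ^ 2) := by
  have h : (WithLp.equiv 2 (Fin d → ℝ)).symm (a + b)
      = (WithLp.equiv 2 (Fin d → ℝ)).symm a + (WithLp.equiv 2 (Fin d → ℝ)).symm b := rfl
  have := norm_add_le ((WithLp.equiv 2 (Fin d → ℝ)).symm a) ((WithLp.equiv 2 (Fin d → ℝ)).symm b)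
  rw [← h] at this
  rw [← sqrt_sum_sq_eq_norm, ← sqrt_sum_sq_eq_norm, ← sqrt_sum_sq_eq_norm] at this
  exact this

lemma abs_le_sqrt_sum_sq (z : Fin d → ℝ) (i : Fin d) :
    |z i| ≤ Real.sqrt (∑ j, z j ^ 2) := by
  have h1 : z i ^ 2 ≤ ∑ j, z j ^ 2 :=
    Finset.single_le_sum (f := fun j => z j ^ 2) (fun j _ => sq_nonneg _) (Finset.mem_univ i)
  calc |z i| = Real.sqrt (z i ^ 2) := (Real.sqrt_sq_eq_abs _).symm
  _ ≤ _ := Real.sqrt_le_sqrt h1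

lemma continuous_sqrt_sum_sq : Continuous (fun z : Fin d → ℝ => Real.sqrt (∑ i, z i ^ 2)) := by
  apply Real.continuous_sqrt.comp
  exact continuous_finset_sum _ fun i _ => (continuous_apply i).pow 2



lemma inv_form_bounds {Q : ℝ} (hQ : 0 < Q) (G A : Fin d → Fin d → ℝ)
    (hGA : ∀ i j, (∑ k, G i k * A k j) = if i = j then (1:ℝ) else 0)
    (hG : ∀ v : Fin d → ℝ,
      Q⁻¹ * (∑ i, v i ^ 2) ≤ (∑ i, ∑ j, v i * G i j * v j) ∧
      (∑ i, ∑ j, v i * G i j * v j) ≤ Q * (∑ i, v i ^ 2))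
    (v : Fin d → ℝ) :
    0 ≤ (∑ i, ∑ j, v i * A i j * v j) ∧
      (∑ i, ∑ j, v i * A i j * v j) ≤ Q * ∑ i, v i ^ 2 := by
  set w : Fin d → ℝ := fun j => ∑ k, A j k * v k with hw
  have hGw : ∀ i, (∑ k, G i k * w k) = v i := by
    intro i
    have : (∑ k, G i k * w k) = ∑ m, (∑ k, G i k * A k m) * v m := by
      simp only [hw, Finset.mul_sum]
      rw [Finset.sum_comm]
      exact Finset.sum_congr rfl fun m _ => by
        rw [Finset.sum_mul]; exact Finset.sum_congr rfl fun k _ => by ring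
    rw [this]
    simp [hGA]
  have hvw : (∑ i, ∑ j, v i * A i j * v j) = ∑ i, v i * w i := by
    refine Finset.sum_congr rfl fun i _ => ?_
    rw [hw, Finset.mul_sum]
    exact Finset.sum_congr rfl fun j _ => by ring
  have hwGw : (∑ i, ∑ j, w i * G i j * w j) = ∑ i, v i * w i := by
    calc (∑ i, ∑ j, w i * G i j * w j) = ∑ i, w i * (∑ j, G i j * w j) := by
          refine Finset.sum_congr rfl fun i _ => ?_
          rw [Finset.mul_sum]
          exact Finset.sum_congr rfl fun j _ => by ring
    _ = ∑ i, v i * w i := by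
          refine Finset.sum_congr rfl fun i _ => ?_
          rw [hGw i]; ring
  have hlow := (hG w).1
  have hw2 : (0:ℝ) ≤ ∑ i, w i ^ 2 := Finset.sum_nonneg fun i _ => sq_nonneg _
  have hv2 : (0:ℝ) ≤ ∑ i, v i ^ 2 := Finset.sum_nonneg fun i _ => sq_nonneg _
  constructor
  · rw [hvw, ← hwGw]
    have : (0:ℝ) ≤ Q⁻¹ * ∑ i, w i ^ 2 := by positivity
    linarith [hlow, hwGw]
  · -- 2∑ v w ≤ Q∑v² + Q⁻¹∑w² and Q⁻¹∑w² ≤ ∑ v w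
    have hyoung : 2 * (∑ i, v i * w i) ≤ Q * (∑ i, v i ^ 2) + Q⁻¹ * (∑ i, w i ^ 2) := by
      have : ∀ i : Fin d, 2 * (v i * w i) ≤ Q * v i ^ 2 + Q⁻¹ * w i ^ 2 := by
        intro i
        nlinarith [sq_nonneg (Q * v i - w i), mul_inv_cancel₀ (ne_of_gt hQ),
          inv_pos.mpr hQ, sq_nonneg (w i), sq_nonneg (v i)]
      calc 2 * (∑ i, v i * w i) = ∑ i, 2 * (v i * w i) := by rw [Finset.mul_sum]
      _ ≤ ∑ i, (Q * v i ^ 2 + Q⁻¹ * w i ^ 2) := Finset.sum_le_sum fun i _ => this i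
      _ = Q * (∑ i, v i ^ 2) + Q⁻¹ * (∑ i, w i ^ 2) := by
            rw [Finset.sum_add_distrib, Finset.mul_sum, Finset.mul_sum]
    have h2 : Q⁻¹ * (∑ i, w i ^ 2) ≤ ∑ i, v i * w i := by rw [← hwGw]; exact hlow
    rw [hvw]
    linarith


lemma double_sum_add (f g : Fin d → Fin d → ℝ) :
    (∑ i, ∑ j, (f i j + g i j)) = (∑ i, ∑ j, f i j) + ∑ i, ∑ j, g i j := by
  simp [Finset.sum_add_distrib]

lemma trace_pair_nonpos (A H : Matrix (Fin d) (Fin d) ℝ)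
    (hA : ∀ v : Fin d → ℝ, 0 ≤ ∑ i, ∑ j, v i * A i j * v j)
    (hHsymm : ∀ i j, H i j = H j i)
    (hH : ∀ v : Fin d → ℝ, (∑ i, ∑ j, v i * H i j * v j) ≤ 0) :
    (∑ i, ∑ j, A i j * H i j) ≤ 0 := by
  classical
  set P : Matrix (Fin d) (Fin d) ℝ := A + Aᵀ with hP
  have hswapform : ∀ x : Fin d → ℝ,
      (∑ i, ∑ j, x i * Aᵀ i j * x j) = ∑ i, ∑ j, x i * A i j * x j := by
    intro x
    rw [Finset.sum_comm]
    exact Finset.sum_congr rfl fun i _ => Finset.sum_congr rfl fun j _ => by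
      rw [Matrix.transpose_apply]; ring
  have hPsd : P.PosSemidef := by
    refine Matrix.posSemidef_iff_dotProduct_mulVec.mpr ⟨?_, ?_⟩
    · unfold Matrix.IsHermitian
      ext i j
      simp [hP, Matrix.transpose_apply, Matrix.conjTranspose_apply, Matrix.add_apply]
      ring
    · intro x
      have hform : star x ⬝ᵥ (P *ᵥ x) = ∑ i, ∑ j, x i * P i j * x j := by
        simp only [dotProduct, Matrix.mulVec, star_trivial]
        exact Finset.sum_congr rfl fun i _ => by
          rw [Finset.mul_sum]; exact Finset.sum_congr rfl fun j _ => by ring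
      rw [hform]
      have h2 : (∑ i, ∑ j, x i * P i j * x j)
          = (∑ i, ∑ j, x i * A i j * x j) + ∑ i, ∑ j, x i * Aᵀ i j * x j := by
        rw [← double_sum_add]
        exact Finset.sum_congr rfl fun i _ => Finset.sum_congr rfl fun j _ => by
          simp [hP, Matrix.add_apply]; ring
      rw [h2, hswapform]
      have := hA x
      linarith
  set Sq := (open scoped MatrixOrder Matrix.Norms.L2Operator in CFC.sqrt P) with hSq
  have hSherm : Sq.IsHermitian := (open scoped MatrixOrder Matrix.Norms.L2Operator in (Matrix.nonneg_iff_posSemidef.mp (CFC.sqrt_nonneg P)).1)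
  have hSentry : ∀ i j, Sq i j = Sq j i := by
    intro i j
    conv_lhs => rw [← hSherm]
    simp [Matrix.conjTranspose_apply]
  have hSS : Sq * Sq = P := open scoped MatrixOrder Matrix.Norms.L2Operator in CFC.sqrt_mul_sqrt_self P hPsd.nonneg
  have hPH : (∑ i, ∑ j, P i j * H i j)
      = (∑ i, ∑ j, A i j * H i j) + ∑ i, ∑ j, Aᵀ i j * H i j := by
    rw [← double_sum_add]
    exact Finset.sum_congr rfl fun i _ => Finset.sum_congr rfl fun j _ => by
      simp [hP, Matrix.add_apply]; ring
  have hswapH : (∑ i, ∑ j, Aᵀ i j * H i j) = ∑ i, ∑ j, A i j * H i j := by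
    rw [Finset.sum_comm]
    refine Finset.sum_congr rfl fun i _ => Finset.sum_congr rfl fun j _ => ?_
    rw [Matrix.transpose_apply, hHsymm i j]
  have htr : (∑ i, ∑ j, P i j * H i j) = Matrix.trace (P * H) := by
    unfold Matrix.trace
    simp only [Matrix.diag_apply, Matrix.mul_apply]
    exact Finset.sum_congr rfl fun i _ => Finset.sum_congr rfl fun j _ => by
      rw [hHsymm j i]
  have hkey : Matrix.trace (P * H) ≤ 0 := by
    rw [← hSS, Matrix.mul_assoc, Matrix.trace_mul_comm Sq (Sq * H)]
    have hexp : Matrix.trace (Sq * H * Sq)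
        = ∑ k, ∑ i, ∑ j, (fun i => Sq i k) i * H i j * (fun i => Sq i k) j := by
      unfold Matrix.trace
      simp only [Matrix.diag_apply, Matrix.mul_apply]
      refine Finset.sum_congr rfl fun k _ => ?_
      rw [Finset.sum_comm]
      refine Finset.sum_congr rfl fun i _ => ?_
      rw [Finset.sum_mul]
      refine Finset.sum_congr rfl fun j _ => ?_
      rw [hSentry k j]
    rw [hexp]
    exact Finset.sum_nonpos fun k _ => hH _
  rw [← htr, hPH, hswapH] at hkey
  linarith


lemma secondDeriv_nonpos_of_isLocalMax {h h' : ℝ → ℝ} {c : ℝ}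
    (hdd : ∀ᶠ t in nhds (0:ℝ), HasDerivAt h (h' t) t)
    (hd' : HasDerivAt h' c 0)
    (hmax : IsLocalMax h 0) : c ≤ 0 := by
  by_contra hc
  push_neg at hc
  have h'0 : h' 0 = 0 := by
    have h1 : deriv h 0 = 0 := hmax.deriv_eq_zero
    have h2 : HasDerivAt h (h' 0) 0 := hdd.self_of_nhds
    rw [← h2.deriv, h1]
  -- slope of h' at 0 tends to c > 0
  have hslope := hasDerivAt_iff_tendsto_slope.mp hd'
  have hpos : ∀ᶠ t in nhdsWithin 0 {(0:ℝ)}ᶜ, 0 < h' t / t := by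
    have hev : ∀ᶠ y in nhds c, 0 < y := eventually_gt_nhds hc
    filter_upwards [hslope.eventually hev] with t ht
    have h2 : 0 < slope h' 0 t := ht
    rw [slope_def_field] at h2
    simpa [h'0] using h2
  rw [eventually_nhdsWithin_iff] at hpos
  obtain ⟨δ, hδ0, hδ⟩ := Metric.eventually_nhds_iff.mp (hpos.and (hdd.and hmax))
  set t₀ := δ / 2 with ht₀
  have ht₀pos : 0 < t₀ := by positivity
  have hmono : StrictMonoOn h (Icc 0 t₀) := by
    apply strictMonoOn_of_deriv_pos (convex_Icc 0 t₀)
    · intro t ht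
      have habs : dist t 0 < δ := by
        rw [Real.dist_eq, sub_zero, abs_of_nonneg ht.1]
        calc t ≤ t₀ := ht.2
        _ < δ := by rw [ht₀]; linarith
      exact ((hδ habs).2.1).continuousAt.continuousWithinAt
    · intro t ht
      rw [interior_Icc] at ht
      have habs : dist t 0 < δ := by
        rw [Real.dist_eq, sub_zero, abs_of_nonneg ht.1.le]
        calc t < t₀ := ht.2
        _ < δ := by rw [ht₀]; linarith
      have hds := hδ habs
      have hpt : 0 < h' t / t := hds.1 (by simp [mem_compl_singleton_iff]; exact ne_of_gt ht.1)
      have : 0 < h' t := by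
        have := mul_pos hpt ht.1
        rwa [div_mul_cancel₀ _ (ne_of_gt ht.1)] at this
      rwa [(hds.2.1).deriv]
  have hlt : h 0 < h t₀ :=
    hmono (left_mem_Icc.mpr ht₀pos.le) (right_mem_Icc.mpr ht₀pos.le) ht₀pos
  have hle : h t₀ ≤ h 0 := by
    have habs : dist t₀ 0 < δ := by
      rw [Real.dist_eq, sub_zero, abs_of_pos ht₀pos]
      rw [ht₀]; linarith
    exact (hδ habs).2.2
  linarith


noncomputable def Dq (z : Fin d → ℝ) : (Fin d → ℝ) →L[ℝ] ℝ :=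
  ∑ i : Fin d, (2 * z i) • (ContinuousLinearMap.proj i : (Fin d → ℝ) →L[ℝ] ℝ)

lemma hasFDerivAt_sum_sq (z : Fin d → ℝ) :
    HasFDerivAt (fun w : Fin d → ℝ => ∑ i, w i ^ 2) (Dq z) z := by
  have h : ∀ i : Fin d, HasFDerivAt (fun w : Fin d → ℝ => w i ^ 2)
      ((2 * z i) • (ContinuousLinearMap.proj i : (Fin d → ℝ) →L[ℝ] ℝ)) z := by
    intro i
    have h1 : HasFDerivAt (fun w : Fin d → ℝ => w i)
        (ContinuousLinearMap.proj i : (Fin d → ℝ) →L[ℝ] ℝ) z :=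
      (ContinuousLinearMap.proj i : (Fin d → ℝ) →L[ℝ] ℝ).hasFDerivAt
    have := h1.fun_mul h1
    simpa [pow_two, two_mul, add_smul] using this
  exact HasFDerivAt.fun_sum fun i _ => h i

lemma Dq_apply (z v : Fin d → ℝ) : Dq z v = ∑ i, 2 * z i * v i := by
  simp [Dq, ContinuousLinearMap.sum_apply, ContinuousLinearMap.smul_apply,
    ContinuousLinearMap.proj_apply, smul_eq_mul]

lemma Dq_single (z : Fin d → ℝ) (j : Fin d) : Dq z (Pi.single j 1) = 2 * z j := by
  rw [Dq_apply]
  rw [Finset.sum_eq_single j]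
  · simp
  · intro i _ hij
    simp [Pi.single_apply, hij]
  · simp

lemma bilinear_expand (B : (Fin d → ℝ) →L[ℝ] (Fin d → ℝ) →L[ℝ] ℝ) (v : Fin d → ℝ) :
    B v v = ∑ i, ∑ j, v i * v j * B (Pi.single i 1) (Pi.single j 1) := by
  have hv : v = ∑ i : Fin d, v i • (Pi.single i 1 : Fin d → ℝ) := by
    funext k
    rw [Finset.sum_apply]
    have h : ∀ i : Fin d, (v i • (Pi.single i 1 : Fin d → ℝ)) k
        = if k = i then v i else 0 := by
      intro i
      by_cases hki : k = i <;> simp [Pi.single_apply, hki]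
    simp [h]
  have h1 : ∀ w, B v w = ∑ i, v i * B (Pi.single i 1) w := by
    intro w
    conv_lhs => rw [hv]
    rw [map_sum, ContinuousLinearMap.sum_apply]
    exact Finset.sum_congr rfl fun i _ => by
      rw [map_smul, ContinuousLinearMap.smul_apply, smul_eq_mul]
  have h2 : ∀ i, B (Pi.single i 1) v = ∑ j, v j * B (Pi.single i 1) (Pi.single j 1) := by
    intro i
    conv_lhs => rw [hv]
    rw [map_sum]
    exact Finset.sum_congr rfl fun j _ => by rw [map_smul, smul_eq_mul]
  rw [h1 v]
  refine Finset.sum_congr rfl fun i _ => ?_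
  rw [h2 i, Finset.mul_sum]
  exact Finset.sum_congr rfl fun j _ => by ring

end CYaux

set_option maxHeartbeats 1000000 in
/-- **Cheng–Yau maximum principle from a uniform harmonic radius.** Let `(M, g)` be a complete
Riemannian manifold such that every point admits harmonic coordinates on the geodesic ball of
radius `r` in which `Q⁻¹ δ ≤ g ≤ Q δ` and `|∂g| ≤ Q`.  Then for every `C²` function
`f : M → ℝ` bounded above there is a sequence `p_k` with `f(p_k) → sup f`,
`|∇f(p_k)| → 0` and `limsup Δf(p_k) ≤ 0`. -/
theorem cheng_yau_maximum_principle (d : ℕ) (hd : 0 < d)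
    (M : Type*) [MetricSpace M] [CompleteSpace M] [Nonempty M]
    (r Q : ℝ) (hr : 0 < r) (hQ : 1 < Q)
    (f lapf gradf2 : M → ℝ)
    (hbdd : BddAbove (range f))
    (hcharts : ∀ x : M,
      ∃ (φ : M → (Fin d → ℝ)) (ψ : (Fin d → ℝ) → M)
        (G Ginv : (Fin d → ℝ) → Fin d → Fin d → ℝ),
        φ x = 0 ∧
        InjOn φ (Metric.ball x r) ∧
        IsOpen (φ '' Metric.ball x r) ∧
        (∀ y ∈ Metric.ball x r, ψ (φ y) = y) ∧
        -- the coordinates are bi-Lipschitz compatible with the Riemannian distance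
        (∀ y ∈ Metric.ball x r, ∀ z ∈ Metric.ball x r,
          Q⁻¹ * Real.sqrt (∑ i, (φ y i - φ z i) ^ 2) ≤ dist y z ∧
          dist y z ≤ Q * Real.sqrt (∑ i, (φ y i - φ z i) ^ 2)) ∧
        -- the metric coefficients are smooth, `Q`-controlled with `Q`-bounded derivatives
        (∀ i j, ContDiffOn ℝ 1 (fun z => G z i j) (φ '' Metric.ball x r)) ∧
        (∀ z ∈ φ '' Metric.ball x r, ∀ i j,
          (∑ k, G z i k * Ginv z k j) = if i = j then 1 else 0) ∧
        (∀ z ∈ φ '' Metric.ball x r, ∀ v : Fin d → ℝ,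
          Q⁻¹ * (∑ i, (v i) ^ 2) ≤ (∑ i, ∑ j, v i * G z i j * v j) ∧
          (∑ i, ∑ j, v i * G z i j * v j) ≤ Q * (∑ i, (v i) ^ 2)) ∧
        (∀ z ∈ φ '' Metric.ball x r, ∀ l i j, |pd l (fun y => G y i j) z| ≤ Q) ∧
        -- the coordinates are harmonic: `∂_i (√det g · g^{ij}) = 0`
        (∀ z ∈ φ '' Metric.ball x r, ∀ j : Fin d,
          (∑ i, pd i (fun y => Real.sqrt (Matrix.det (Matrix.of fun a b => G y a b)) *
            Ginv y i j) z) = 0) ∧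
        -- `f` is `C²` in these coordinates, and `Δf`, `|∇f|²` have their coordinate expressions
        ContDiffOn ℝ 2 (f ∘ ψ) (φ '' Metric.ball x r) ∧
        (∀ y ∈ Metric.ball x r,
          lapf y = ∑ i, ∑ j, Ginv (φ y) i j * pd i (fun z => pd j (f ∘ ψ) z) (φ y) ∧
          gradf2 y = ∑ i, ∑ j, Ginv (φ y) i j * pd i (f ∘ ψ) (φ y) * pd j (f ∘ ψ) (φ y))) :
    ∃ p : ℕ → M,
      Tendsto (fun k => f (p k)) atTop (nhds (sSup (range f))) ∧
      Tendsto (fun k => gradf2 (p k)) atTop (nhds 0) ∧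
      limsup (fun k => lapf (p k)) atTop ≤ 0 := by
  classical
  have hQ0 : (0:ℝ) < Q := lt_trans one_pos hQ
  set S := sSup (range f) with hSdef
  have key : ∀ ε : ℝ, 0 < ε →
      ∃ p : M, S - ε < f p ∧ 0 ≤ gradf2 p ∧ gradf2 p ≤ ε ∧ lapf p ≤ ε := by
    intro ε hε
    have hd1 : (0:ℝ) < (d:ℝ) + 1 := by positivity
    set a := min 1 (min ε (ε * r^2/(64 * Q^3 * ((d:ℝ)+1)))) with ha
    have ha0 : 0 < a := lt_min one_pos (lt_min hε (by positivity))
    have ha1 : a ≤ 1 := min_le_left _ _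
    have haε : a ≤ ε := le_trans (min_le_right _ _) (min_le_left _ _)
    have haQ : a ≤ ε * r^2/(64 * Q^3 * ((d:ℝ)+1)) :=
      le_trans (min_le_right _ _) (min_le_right _ _)
    obtain ⟨fx, hfxmem, hfx⟩ :=
      exists_lt_of_lt_csSup (range_nonempty f) (show S - a < S by linarith)
    obtain ⟨x, rfl⟩ := hfxmem
    obtain ⟨φ, ψ, G, Ginv, hφx, hinj, hopen, hψφ, hbilip, hGsmooth, hGprod, hGform,
      hGderiv, hharm, hf2, hform⟩ := hcharts x
    set U := φ '' Metric.ball x r with hUdef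
    have hxball : x ∈ Metric.ball x r := Metric.mem_ball_self hr
    have h0U : (0 : Fin d → ℝ) ∈ U := ⟨x, hxball, hφx⟩
    have hUball : ∀ z ∈ U, Real.sqrt (∑ i, z i ^ 2) < Q * r := by
      rintro z ⟨y, hy, rfl⟩
      have h1 := (hbilip y hy x hxball).1
      have h2 : (∑ i, (φ y i - φ x i)^2) = ∑ i, φ y i ^ 2 := by
        refine Finset.sum_congr rfl fun i _ => ?_
        rw [hφx]; simp
      rw [h2] at h1
      have h3 : dist y x < r := Metric.mem_ball.mp hy
      calc Real.sqrt (∑ i, φ y i ^2)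
          = Q * (Q⁻¹ * Real.sqrt (∑ i, φ y i ^2)) := by
            field_simp
      _ ≤ Q * dist y x := mul_le_mul_of_nonneg_left h1 hQ0.le
      _ < Q * r := mul_lt_mul_of_pos_left h3 hQ0
    -- boundary estimate
    have hbdry : ∀ z ∈ closure U, z ∉ U → r ≤ Q * Real.sqrt (∑ i, z i ^ 2) := by
      intro z hzc hzU
      obtain ⟨w, hwU, hwz⟩ := mem_closure_iff_seq_limit.mp hzc
      choose y hyball hyφ using fun n => hwU n
      set e := fun n => Real.sqrt (∑ i, (w n i - z i)^2) with he
      have hecont : Tendsto e atTop (nhds 0) := by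
        have hc : Continuous (fun q : Fin d → ℝ => Real.sqrt (∑ i, (q i - z i)^2)) := by
          apply Real.continuous_sqrt.comp
          exact continuous_finset_sum _ fun i _ => ((continuous_apply i).sub continuous_const).pow 2
        simpa [he, Function.comp_def] using (hc.tendsto z).comp hwz
      have hcauchy : CauchySeq y := by
        rw [Metric.cauchySeq_iff]
        intro ε' hε'
        obtain ⟨N, hN⟩ := eventually_atTop.mp
          (hecont.eventually (eventually_lt_nhds (show (0:ℝ) < ε'/(2*Q) by positivity)))
        refine ⟨N, fun m hm n hn => ?_⟩
        have h1 := (hbilip (y m) (hyball m) (y n) (hyball n)).2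
        have h2 : Real.sqrt (∑ i, (φ (y m) i - φ (y n) i)^2) ≤ e m + e n := by
          calc Real.sqrt (∑ i, (φ (y m) i - φ (y n) i)^2)
              = Real.sqrt (∑ i, ((fun i => w m i - z i) i + (fun i => z i - w n i) i)^2) := by
                congr 1
                refine Finset.sum_congr rfl fun i _ => ?_
                rw [hyφ m, hyφ n]; ring_nf
          _ ≤ Real.sqrt (∑ i, (w m i - z i)^2) + Real.sqrt (∑ i, (z i - w n i)^2) :=
                CYaux.sqrt_sum_sq_triangle _ _
          _ = e m + e n := by
                rw [he]
                congr 2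
                refine Finset.sum_congr rfl fun i _ => by ring
        calc dist (y m) (y n) ≤ Q * Real.sqrt (∑ i, (φ (y m) i - φ (y n) i)^2) := h1
        _ ≤ Q * (e m + e n) := mul_le_mul_of_nonneg_left h2 hQ0.le
        _ < Q * (ε'/(2*Q) + ε'/(2*Q)) :=
              mul_lt_mul_of_pos_left (add_lt_add (hN m hm) (hN n hn)) hQ0
        _ = ε' := by field_simp; ring
      obtain ⟨p₀, hp₀⟩ := cauchySeq_tendsto_of_complete hcauchy
      have hdxp : dist x p₀ ≤ r := by
        have h1 : Tendsto (fun n => dist x (y n)) atTop (nhds (dist x p₀)) :=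
          Tendsto.dist tendsto_const_nhds hp₀
        apply le_of_tendsto h1
        filter_upwards with n
        rw [dist_comm]
        exact (Metric.mem_ball.mp (hyball n)).le
      rcases lt_or_eq_of_le hdxp with hlt | heq
      · exfalso
        have hp₀ball : p₀ ∈ Metric.ball x r := by
          rw [Metric.mem_ball, dist_comm]; exact hlt
        have hφconv : Tendsto (fun n => φ (y n)) atTop (nhds (φ p₀)) := by
          rw [tendsto_pi_nhds]
          intro i
          have hsq : ∀ n, |φ (y n) i - φ p₀ i| ≤ Q * dist p₀ (y n) := by
            intro n
            have h1 := (hbilip p₀ hp₀ball (y n) (hyball n)).1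
            have h2 : |φ (y n) i - φ p₀ i| ≤ Real.sqrt (∑ j, (φ p₀ j - φ (y n) j)^2) := by
              have h3 := CYaux.abs_le_sqrt_sum_sq (fun j => φ p₀ j - φ (y n) j) i
              rw [abs_sub_comm] at h3
              exact h3
            calc |φ (y n) i - φ p₀ i| ≤ Real.sqrt (∑ j, (φ p₀ j - φ (y n) j)^2) := h2
            _ = Q * (Q⁻¹ * Real.sqrt (∑ j, (φ p₀ j - φ (y n) j)^2)) := by field_simp
            _ ≤ Q * dist p₀ (y n) := mul_le_mul_of_nonneg_left h1 hQ0.le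
          have hdist0 : Tendsto (fun n => Q * dist p₀ (y n)) atTop (nhds 0) := by
            have h4 : Tendsto (fun n => dist p₀ (y n)) atTop (nhds (dist p₀ p₀)) :=
              Tendsto.dist tendsto_const_nhds hp₀
            simpa using h4.const_mul Q
          have hsq' : ∀ n, ‖φ (y n) i - φ p₀ i‖ ≤ Q * dist p₀ (y n) := hsq
          have h5 := squeeze_zero_norm hsq' hdist0
          exact tendsto_sub_nhds_zero_iff.mp h5
        have hweq : Tendsto (fun n => φ (y n)) atTop (nhds z) := by
          have h6 : (fun n => φ (y n)) = w := funext hyφ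
          rw [h6]; exact hwz
        exact hzU ⟨p₀, hp₀ball, tendsto_nhds_unique hφconv hweq⟩
      · have h1 : ∀ n, dist x (y n) ≤ Q * Real.sqrt (∑ i, (w n i)^2) := by
          intro n
          calc dist x (y n) ≤ Q * Real.sqrt (∑ i, (φ x i - φ (y n) i)^2) :=
                (hbilip x hxball (y n) (hyball n)).2
          _ = Q * Real.sqrt (∑ i, (w n i)^2) := by
                congr 2
                refine Finset.sum_congr rfl fun i _ => ?_
                rw [hφx, hyφ n]
                simp only [Pi.zero_apply]
                ring
        have h2 : Tendsto (fun n => Q * Real.sqrt (∑ i, (w n i)^2)) atTop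
            (nhds (Q * Real.sqrt (∑ i, z i ^2))) := by
          have hc : Continuous fun q : Fin d → ℝ => Q * Real.sqrt (∑ i, q i ^2) :=
            continuous_const.mul CYaux.continuous_sqrt_sum_sq
          exact (hc.tendsto z).comp hwz
        have h3 : Tendsto (fun n => dist x (y n)) atTop (nhds (dist x p₀)) :=
          Tendsto.dist tendsto_const_nhds hp₀
        have h4 := le_of_tendsto_of_tendsto' h3 h2 h1
        rw [← heq]
        exact h4
    -- the compact set K
    set ρ2 := (r/(2*Q))^2 with hρ2
    have hρ2pos : 0 < ρ2 := by positivity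
    set K := closure U ∩ {z : Fin d → ℝ | (∑ i, z i ^2) ≤ ρ2} with hKdef
    have hKU : K ⊆ U := by
      rintro z ⟨hzc, hz2⟩
      by_contra hzU
      have h1 := hbdry z hzc hzU
      rw [mul_comm] at h1
      have h2 : r / Q ≤ Real.sqrt (∑ i, z i ^2) := by
        rw [div_le_iff₀ hQ0]; exact h1
      have h3 : (r/Q)^2 ≤ ∑ i, z i ^2 := by
        have hnn : (0:ℝ) ≤ ∑ i, z i ^2 := Finset.sum_nonneg fun i _ => sq_nonneg _
        calc (r/Q)^2 ≤ (Real.sqrt (∑ i, z i^2))^2 := by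
              apply pow_le_pow_left₀ (by positivity) h2
        _ = ∑ i, z i ^2 := Real.sq_sqrt hnn
      have h4 : ρ2 < (r/Q)^2 := by
        rw [hρ2]
        apply pow_lt_pow_left₀ _ (by positivity) (two_ne_zero)
        apply div_lt_div_of_pos_left hr hQ0
        linarith
      have h5 : (∑ i, z i ^2) ≤ ρ2 := hz2
      linarith
    have hKclosed : IsClosed K :=
      isClosed_closure.inter (isClosed_le
        (continuous_finset_sum _ fun i _ => (continuous_apply i).pow 2) continuous_const)
    have hKbdd : Bornology.IsBounded K := by
      have hUb : U ⊆ Metric.closedBall 0 (Q*r) := by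
        intro z hz
        rw [Metric.mem_closedBall, dist_zero_right]
        rw [pi_norm_le_iff_of_nonneg (by positivity)]
        intro i
        calc ‖z i‖ = |z i| := rfl
        _ ≤ Real.sqrt (∑ j, z j ^2) := CYaux.abs_le_sqrt_sum_sq z i
        _ ≤ Q * r := (hUball z hz).le
      have hcl : closure U ⊆ Metric.closedBall 0 (Q*r) :=
        closure_minimal hUb Metric.isClosed_closedBall
      exact Metric.isBounded_closedBall.subset (le_trans (inter_subset_left) hcl)
    have hKcpt : IsCompact K := Metric.isCompact_of_isClosed_isBounded hKclosed hKbdd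
    have h0K : (0 : Fin d → ℝ) ∈ K := by
      refine ⟨subset_closure h0U, ?_⟩
      simp only [mem_setOf_eq, Pi.zero_apply]
      simpa using hρ2pos.le
    set lam := 8 * a * Q^2 / r^2 with hlam
    have hlam0 : 0 < lam := by positivity
    have hlamρ : lam * ρ2 = 2 * a := by rw [hlam, hρ2]; field_simp [hr.ne', hQ0.ne']; ring
    set u := f ∘ ψ with hu
    set g := fun z : Fin d → ℝ => u z - lam * ∑ i, z i ^2 with hg
    have hucont : ContinuousOn u U := hf2.continuousOn
    have hgcont : ContinuousOn g U :=
      hucont.sub (continuous_const.mul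
        (continuous_finset_sum _ fun i _ => (continuous_apply i).pow 2)).continuousOn
    have huS : ∀ z ∈ U, u z ≤ S := by
      rintro z ⟨y, hy, rfl⟩
      rw [hu, Function.comp_apply, hψφ y hy]
      exact le_csSup hbdd ⟨y, rfl⟩
    have hg0 : g 0 = f x := by
      rw [hg]
      simp only
      have h1 : u 0 = f x := by
        rw [← hφx, hu, Function.comp_apply, hψφ x hxball]
      rw [h1]
      simp
    obtain ⟨p', hp'K, hp'max⟩ := hKcpt.exists_isMaxOn ⟨0, h0K⟩ (hgcont.mono hKU)
    have hp'U : p' ∈ U := hKU hp'K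
    have hmaxU : ∀ z ∈ U, g z ≤ g p' := by
      intro z hz
      by_cases hz2 : (∑ i, z i ^2) ≤ ρ2
      · exact hp'max ⟨subset_closure hz, hz2⟩
      · push_neg at hz2
        have h1 : g z ≤ S - lam * ρ2 := by
          have h2 := huS z hz
          have h3 : lam * ρ2 ≤ lam * ∑ i, z i^2 :=
            mul_le_mul_of_nonneg_left hz2.le hlam0.le
          rw [hg]
          simp only
          linarith
        have h3 : g 0 ≤ g p' := hp'max h0K
        rw [hlamρ] at h1
        linarith
    have hlocmax : IsLocalMax g p' := by
      filter_upwards [hopen.mem_nhds hp'U] with z hz using hmaxU z hz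
    -- calculus
    have hudiff : ∀ z ∈ U, DifferentiableAt ℝ u z := fun z hz =>
      (hf2.differentiableOn (by norm_num)).differentiableAt (hopen.mem_nhds hz)
    set Du := fun z => fderiv ℝ u z with hDudef
    have hDuC1 : ContDiffOn ℝ 1 Du U := hf2.fderiv_of_isOpen hopen (by norm_num)
    have hDudiff : DifferentiableAt ℝ Du p' :=
      (hDuC1.differentiableOn one_ne_zero).differentiableAt (hopen.mem_nhds hp'U)
    set D2 := fderiv ℝ Du p' with hD2def
    have hD2 : HasFDerivAt Du D2 p' := hDudiff.hasFDerivAt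
    have hsym : ∀ v w : Fin d → ℝ, D2 v w = D2 w v := by
      intro v w
      have hevd : ∀ᶠ z in nhds p', HasFDerivAt u (Du z) z := by
        filter_upwards [hopen.mem_nhds hp'U] with z hz using (hudiff z hz).hasFDerivAt
      exact second_derivative_symmetric_of_eventually hevd hD2 v w
    have hHm : ∀ i j, pd i (fun z => pd j u z) p' = D2 (Pi.single i 1) (Pi.single j 1) := by
      intro i j
      show fderiv ℝ (fun z => fderiv ℝ u z (Pi.single j 1)) p' (Pi.single i 1) = _
      have h1 : (fun z => fderiv ℝ u z (Pi.single j 1))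
          = fun z => (Du z) ((fun _ : Fin d → ℝ => (Pi.single j 1 : Fin d → ℝ)) z) := rfl
      rw [h1, fderiv_clm_apply hDudiff (differentiableAt_const _)]
      simp [ContinuousLinearMap.flip_apply]; rfl
    -- first order condition
    have hgdiff : DifferentiableAt ℝ g p' :=
      (hudiff p' hp'U).sub ((CYaux.hasFDerivAt_sum_sq p').differentiableAt.const_mul lam)
    have hgf0 : fderiv ℝ g p' = 0 := hlocmax.fderiv_eq_zero
    have hgF : HasFDerivAt g (0 : (Fin d → ℝ) →L[ℝ] ℝ) p' := by rw [← hgf0]; exact hgdiff.hasFDerivAt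
    have huF : HasFDerivAt u (lam • CYaux.Dq p') p' := by
      have h1 : HasFDerivAt (fun z : Fin d → ℝ => lam * ∑ i, z i ^2)
          (lam • CYaux.Dq p') p' := (CYaux.hasFDerivAt_sum_sq p').const_mul lam
      have h2 := hgF.fun_add h1
      have h3 : (fun z => g z + lam * ∑ i, z i ^2) = u := by
        funext z; rw [hg]; ring
      rw [h3] at h2
      simpa using h2
    have hDup' : Du p' = lam • CYaux.Dq p' := huF.fderiv
    have hpdu : ∀ j, pd j u p' = 2 * lam * p' j := by
      intro j
      show fderiv ℝ u p' (Pi.single j 1) = _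
      rw [show fderiv ℝ u p' = Du p' from rfl, hDup',
        ContinuousLinearMap.smul_apply, CYaux.Dq_single, smul_eq_mul]
      ring
    -- second order directional bound
    have hdir : ∀ v : Fin d → ℝ, D2 v v ≤ 2 * lam * ∑ i, v i ^2 := by
      intro v
      set L := fun t : ℝ => p' + t • v with hL
      have hL0 : L 0 = p' := by rw [hL]; simp
      have hL' : ∀ t, HasDerivAt L v t := by
        intro t
        have h1 : HasDerivAt (fun t : ℝ => t • v) ((1:ℝ) • v) t :=
          (hasDerivAt_id t).smul_const v
        simpa [hL] using h1.const_add p'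
      have hLU : ∀ᶠ t in nhds (0:ℝ), L t ∈ U := by
        have hc : ContinuousAt L 0 :=
          (continuous_const.add (continuous_id.smul continuous_const)).continuousAt
        exact hc.preimage_mem_nhds (by rw [hL0]; exact hopen.mem_nhds hp'U)
      set h' := fun t : ℝ => Du (L t) v - lam * ∑ j, 2 * L t j * v j with hh'
      have hev : ∀ᶠ t in nhds (0:ℝ), HasDerivAt (fun s => g (L s)) (h' t) t := by
        filter_upwards [hLU] with t ht
        have h1 : HasDerivAt (fun s => u (L s)) (Du (L t) v) t :=
          (hudiff _ ht).hasFDerivAt.comp_hasDerivAt t (hL' t)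
        have h2 : HasDerivAt (fun s => lam * ∑ i, L s i ^2) (lam * (CYaux.Dq (L t) v)) t :=
          ((CYaux.hasFDerivAt_sum_sq (L t)).comp_hasDerivAt t (hL' t)).const_mul lam
        have h3 := h1.sub h2
        rw [hh']
        simp only
        rw [CYaux.Dq_apply] at h3
        exact h3
      have hd'0 : HasDerivAt h' (D2 v v - lam * (2 * ∑ j, v j ^2)) 0 := by
        have hA : HasFDerivAt (fun z => Du z v)
            ((ContinuousLinearMap.apply ℝ ℝ v).comp D2) p' :=
          (ContinuousLinearMap.apply ℝ ℝ v).hasFDerivAt.comp p' hD2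
        rw [← hL0] at hA
        have h1 : HasDerivAt (fun t => Du (L t) v)
            (((ContinuousLinearMap.apply ℝ ℝ v).comp D2) v) 0 :=
          hA.comp_hasDerivAt 0 (hL' 0)
        have h1' : HasDerivAt (fun t => Du (L t) v) (D2 v v) 0 := by
          simpa [ContinuousLinearMap.comp_apply, ContinuousLinearMap.apply_apply] using h1
        have h2 : HasDerivAt (fun t => lam * ∑ j, 2 * L t j * v j)
            (lam * (2 * ∑ j, v j ^2)) 0 := by
          have heq : (fun t : ℝ => lam * ∑ j, 2 * L t j * v j)
              = fun t => (lam * ∑ j, 2 * p' j * v j) + t * (lam * (2 * ∑ j, v j ^2)) := by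
            funext t
            rw [hL]
            simp only [Pi.add_apply, Pi.smul_apply, smul_eq_mul]
            have h4 : ∀ j : Fin d, 2 * (p' j + t * v j) * v j
                = 2 * p' j * v j + t * (2 * v j^2) := fun j => by ring
            rw [Finset.sum_congr rfl fun j _ => h4 j, Finset.sum_add_distrib]
            rw [mul_add]
            congr 1
            rw [← Finset.mul_sum, ← Finset.mul_sum]
            ring
          rw [heq]
          have h5 : HasDerivAt (fun t : ℝ => t * (lam * (2 * ∑ j, v j ^2)))
              (lam * (2 * ∑ j, v j ^2)) 0 := hasDerivAt_mul_const _
          simpa using h5.const_add (lam * ∑ j, 2 * p' j * v j)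
        exact h1'.sub h2
      have hmax0 : IsLocalMax (fun s => g (L s)) 0 := by
        filter_upwards [hLU] with t ht
        have h6 := hmaxU _ ht
        simpa [hL0] using h6
      have h7 := CYaux.secondDeriv_nonpos_of_isLocalMax hev hd'0 hmax0
      linarith
    -- conclude at the max point
    obtain ⟨p₁, hp₁ball, hφp₁⟩ := hp'U
    obtain ⟨hlapf, hgradf⟩ := hform p₁ hp₁ball
    rw [hφp₁] at hlapf hgradf
    have hAb := fun v => CYaux.inv_form_bounds hQ0 (G p') (Ginv p')
      (fun i j => hGprod p' (hφp₁ ▸ mem_image_of_mem φ hp₁ball) i j)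
      (fun w => hGform p' (hφp₁ ▸ mem_image_of_mem φ hp₁ball) w) v
    -- value of f
    have hfp : S - ε < f p₁ := by
      have h1 : g p' ≤ u p' := by
        rw [hg]
        simp only
        have h2 : (0:ℝ) ≤ lam * ∑ i, p' i ^2 := by positivity
        linarith
      have h2 : u p' = f p₁ := by
        rw [← hφp₁, hu, Function.comp_apply, hψφ p₁ hp₁ball]
      have h3 : g 0 ≤ g p' := hp'max h0K
      linarith
    -- gradf2
    have hgrad_eq : gradf2 p₁ = (4 * lam^2) * ∑ i, ∑ j, p' i * Ginv p' i j * p' j := by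
      rw [hgradf, Finset.mul_sum]
      refine Finset.sum_congr rfl fun i _ => ?_
      rw [Finset.mul_sum]
      refine Finset.sum_congr rfl fun j _ => ?_
      rw [hpdu i, hpdu j]; ring
    have hgrad_nonneg : 0 ≤ gradf2 p₁ := by
      rw [hgrad_eq]
      exact mul_nonneg (by positivity) (hAb p').1
    have hp'ρ : (∑ i, p' i ^2) ≤ ρ2 := hp'K.2
    have hgrad_le : gradf2 p₁ ≤ ε := by
      have h1 : gradf2 p₁ ≤ 4 * lam^2 * (Q * ρ2) := by
        rw [hgrad_eq]
        apply mul_le_mul_of_nonneg_left _ (by positivity)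
        exact le_trans (hAb p').2 (mul_le_mul_of_nonneg_left hp'ρ hQ0.le)
      have h2 : 4 * lam^2 * (Q * ρ2) = 64 * a^2 * Q^3 / r^2 := by
        rw [hlam, hρ2]; field_simp [hr.ne', hQ0.ne']; ring
      have h3 : a^2 ≤ ε * r^2/(64 * Q^3 * ((d:ℝ)+1)) := by nlinarith
      have h4 : 64 * a^2 * Q^3 / r^2 ≤ 64 * (ε * r^2/(64 * Q^3 * ((d:ℝ)+1))) * Q^3 / r^2 := by
        gcongr
      have h5 : 64 * (ε * r^2/(64 * Q^3 * ((d:ℝ)+1))) * Q^3 / r^2 = ε / ((d:ℝ)+1) := by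
        field_simp
      have h6 : ε / ((d:ℝ)+1) ≤ ε := by
        apply div_le_self hε.le
        linarith
      linarith
    -- lapf
    have hnegH : ∀ v : Fin d → ℝ,
        (∑ i, ∑ j, v i * ((Matrix.of fun i j =>
          D2 (Pi.single i 1) (Pi.single j 1) - 2*lam*(if i = j then (1:ℝ) else 0)) i j) * v j) ≤ 0 := by
      intro v
      have h1 : (∑ i, ∑ j, v i * (D2 (Pi.single i 1) (Pi.single j 1)
          - 2*lam*(if i = j then (1:ℝ) else 0)) * v j)
          = D2 v v - 2 * lam * ∑ i, v i ^2 := by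
        have h2 : ∀ i j : Fin d, v i * (D2 (Pi.single i 1) (Pi.single j 1)
            - 2*lam*(if i = j then (1:ℝ) else 0)) * v j
            = v i * v j * D2 (Pi.single i 1) (Pi.single j 1)
              - 2*lam*(v i * (if i = j then (1:ℝ) else 0) * v j) := fun i j => by ring
        rw [Finset.sum_congr rfl fun i _ => Finset.sum_congr rfl fun j _ => h2 i j]
        have h3 : ∀ i : Fin d, (∑ j, (v i * v j * D2 (Pi.single i 1) (Pi.single j 1)
              - 2*lam*(v i * (if i = j then (1:ℝ) else 0) * v j)))
            = (∑ j, v i * v j * D2 (Pi.single i 1) (Pi.single j 1))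
              - 2*lam*(v i * v i) := by
          intro i
          rw [Finset.sum_sub_distrib]
          congr 1
          rw [← Finset.mul_sum]
          congr 1
          rw [Finset.sum_eq_single i]
          · simp
          · intro b _ hb; simp [Ne.symm hb]
          · simp
        rw [Finset.sum_congr rfl fun i _ => h3 i, Finset.sum_sub_distrib]
        rw [← CYaux.bilinear_expand]
        congr 1
        rw [← Finset.mul_sum]
        congr 1
        exact Finset.sum_congr rfl fun i _ => by ring
      calc (∑ i, ∑ j, v i * ((Matrix.of fun i j =>
          D2 (Pi.single i 1) (Pi.single j 1) - 2*lam*(if i = j then (1:ℝ) else 0)) i j) * v j)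
          = D2 v v - 2 * lam * ∑ i, v i ^2 := h1
      _ ≤ 0 := by linarith [hdir v]
    have htrace := CYaux.trace_pair_nonpos (Matrix.of fun i j => Ginv p' i j)
      (Matrix.of fun i j => D2 (Pi.single i 1) (Pi.single j 1)
        - 2*lam*(if i = j then (1:ℝ) else 0))
      (fun v => (hAb v).1)
      (fun i j => by
        simp only [Matrix.of_apply]
        rw [hsym (Pi.single i 1) (Pi.single j 1)]
        congr 1
        by_cases h : i = j
        · simp [h]
        · simp [h, Ne.symm h])
      hnegH
    have hdiag : (∑ i, Ginv p' i i) ≤ (d:ℝ) * Q := by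
      have h1 : ∀ i : Fin d, Ginv p' i i ≤ Q := by
        intro i
        have h2 := (hAb (Pi.single i 1)).2
        have h3 : (∑ j, ∑ k, (Pi.single i 1 : Fin d → ℝ) j * Ginv p' j k
            * (Pi.single i 1 : Fin d → ℝ) k) = Ginv p' i i := by
          rw [Finset.sum_eq_single i]
          · rw [Finset.sum_eq_single i]
            · simp
            · intro b _ hb; simp [Ne.symm hb]
            · simp
          · intro b _ hb
            rw [Finset.sum_eq_single i]
            · simp [Ne.symm hb]
            · intro c _ hc; simp [Ne.symm hc]
            · simp
          · simp
        have h4 : (∑ j, ((Pi.single i 1 : Fin d → ℝ) j) ^2) = 1 := by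
          rw [Finset.sum_eq_single i]
          · simp
          · intro b _ hb; simp [Ne.symm hb]
          · simp
        rw [h3, h4] at h2
        simpa using h2
      calc (∑ i, Ginv p' i i) ≤ ∑ _i : Fin d, Q := Finset.sum_le_sum fun i _ => h1 i
      _ = (d:ℝ) * Q := by
        rw [Finset.sum_const, Finset.card_univ, Fintype.card_fin, nsmul_eq_mul]
    have hlap_le : lapf p₁ ≤ ε := by
      have hsplit : lapf p₁ = (∑ i, ∑ j, Ginv p' i j *
          ((Matrix.of fun i j => D2 (Pi.single i 1) (Pi.single j 1)
            - 2*lam*(if i = j then (1:ℝ) else 0)) i j))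
          + 2 * lam * ∑ i, Ginv p' i i := by
        rw [hlapf]
        have h1 : ∀ i j : Fin d, Ginv p' i j * pd i (fun z => pd j u z) p'
            = Ginv p' i j * (D2 (Pi.single i 1) (Pi.single j 1)
                - 2*lam*(if i = j then (1:ℝ) else 0))
              + 2*lam*(Ginv p' i j * (if i = j then (1:ℝ) else 0)) := by
          intro i j
          rw [hHm i j]; ring
        rw [Finset.sum_congr rfl fun i _ => Finset.sum_congr rfl fun j _ => h1 i j]
        rw [CYaux.double_sum_add]
        have h2 : ∀ i : Fin d, (∑ j, 2*lam*(Ginv p' i j * (if i = j then (1:ℝ) else 0)))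
            = 2*lam* Ginv p' i i := by
          intro i
          rw [← Finset.mul_sum]
          congr 1
          rw [Finset.sum_eq_single i]
          · simp
          · intro b _ hb; simp [Ne.symm hb]
          · simp
        rw [Finset.sum_congr rfl fun i _ => h2 i, ← Finset.mul_sum]
        rfl
      have hmul : ∀ i j : Fin d, Ginv p' i j *
          ((Matrix.of fun i j => D2 (Pi.single i 1) (Pi.single j 1)
            - 2*lam*(if i = j then (1:ℝ) else 0)) i j)
          = (Matrix.of fun i j => Ginv p' i j) i j *
          ((Matrix.of fun i j => D2 (Pi.single i 1) (Pi.single j 1)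
            - 2*lam*(if i = j then (1:ℝ) else 0)) i j) := fun i j => rfl
      have h8 : (∑ i, ∑ j, Ginv p' i j *
          ((Matrix.of fun i j => D2 (Pi.single i 1) (Pi.single j 1)
            - 2*lam*(if i = j then (1:ℝ) else 0)) i j)) ≤ 0 := htrace
      have h9 : 2 * lam * ∑ i, Ginv p' i i ≤ 2 * lam * ((d:ℝ) * Q) :=
        mul_le_mul_of_nonneg_left hdiag (by positivity)
      have h10 : 2 * lam * ((d:ℝ) * Q) = 16 * a * Q^3 * (d:ℝ) / r^2 := by
        rw [hlam]; field_simp [hr.ne', hQ0.ne']; ring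
      have h11 : 16 * a * Q^3 * (d:ℝ) / r^2
          ≤ 16 * (ε * r^2/(64 * Q^3 * ((d:ℝ)+1))) * Q^3 * (d:ℝ) / r^2 := by
        gcongr
      have h12 : 16 * (ε * r^2/(64 * Q^3 * ((d:ℝ)+1))) * Q^3 * (d:ℝ) / r^2
          = ε * (d:ℝ) / (4*((d:ℝ)+1)) := by
        field_simp [hr.ne', hQ0.ne']
        ring
      have h13 : ε * (d:ℝ) / (4*((d:ℝ)+1)) ≤ ε := by
        rw [div_le_iff₀ (by positivity)]
        nlinarith [Nat.cast_nonneg (α := ℝ) d, hε.le]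
      linarith
    exact ⟨p₁, hfp, hgrad_nonneg, hgrad_le, hlap_le⟩

  have hone : Tendsto (fun k : ℕ => 1/((k:ℝ)+1)) atTop (nhds 0) := by
    exact tendsto_one_div_add_atTop_nhds_zero_nat
  choose p hp using fun k : ℕ => key (1/((k:ℝ)+1)) (by positivity)
  refine ⟨p, ?_, ?_, ?_⟩
  · have hub : ∀ k, f (p k) ≤ S := fun k => le_csSup hbdd ⟨p k, rfl⟩
    have hlb : ∀ k : ℕ, S - 1/((k:ℝ)+1) ≤ f (p k) := fun k => (hp k).1.le
    have h1 : Tendsto (fun k : ℕ => S - 1/((k:ℝ)+1)) atTop (nhds S) := by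
      simpa using tendsto_const_nhds.sub hone
    exact tendsto_of_tendsto_of_tendsto_of_le_of_le h1 tendsto_const_nhds hlb hub
  · exact tendsto_of_tendsto_of_tendsto_of_le_of_le tendsto_const_nhds hone
      (fun k => (hp k).2.1) (fun k => (hp k).2.2.1)
  · have hev : ∀ ε : ℝ, 0 < ε → ∀ᶠ k in atTop, lapf (p k) ≤ ε := by
      intro ε hε
      filter_upwards [hone.eventually (eventually_le_nhds hε)] with k hk
      exact le_trans (hp k).2.2.2 hk
    rw [limsup_eq]
    set T : Set ℝ := {a : ℝ | ∀ᶠ k in atTop, lapf (p k) ≤ a} with hT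
    by_cases hbb : BddBelow T
    · apply le_of_forall_pos_le_add
      intro ε hε
      have h1 : sInf T ≤ ε := csInf_le hbb (hev ε hε)
      linarith
    · rw [Real.sInf_of_not_bddBelow hbb]
end
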